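/- Let T=(V,E) be a tree and t ≥ 2 an integer. For any w = z^{j-1} x x_{j+1} ⋯ x_t and w' = z^{j-1} y y_{j+1} ⋯ y_t in V^t, where 1 ≤ j ≤ t−1, x, y, z ∈ V and x ≠ y, we have d_{S(T,t)}(w, w') = d_{S(T,t-j)}( (x')^{t-j}, x_{j+1}⋯x_t ) + d_{S(T,t-j)}( (y')^{t-j}, y_{j+1}⋯y_t ) + (2^{t-j+1} − 1)·d_T(x,y) − 2(2^{t-j} − 1), where x' and y' are the neighbors of x and y, respectively, lying on the (unique) path in T between x and y. -/

import Mathlib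

/-- The generalized Sierpiński graph `S(G,t)` of a base graph `G`: vertices are words of
length `t` over the vertex set (encoded as `Fin t → V`); two words are adjacent iff they are
of the form `w x y^{d-1}` and `w y x^{d-1}` for some edge `{x,y}` of `G`. -/
def SierpinskiGraph {V : Type*} (G : SimpleGraph V) (t : ℕ) : SimpleGraph (Fin t → V) where
  Adj u v := ∃ i : Fin t, G.Adj (u i) (v i) ∧
      (∀ j : Fin t, j < i → u j = v j) ∧
      (∀ j : Fin t, i < j → u j = v i ∧ v j = u i)
  symm := by
    refine ⟨?_⟩
    rintro u v ⟨i, h1, h2, h3⟩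
    exact ⟨i, h1.symm, fun j hj => (h2 j hj).symm, fun j hj => ⟨(h3 j hj).2, (h3 j hj).1⟩⟩
  loopless := by
    refine ⟨?_⟩
    rintro u ⟨i, h1, -, -⟩
    exact G.loopless.irrefl _ h1


open SimpleGraph

namespace SGAux

variable {V : Type*} {T : SimpleGraph V}

/-- a chosen geodesic path from `a` to `b` in a connected graph -/
noncomputable def geod (hc : T.Connected) (a b : V) : T.Walk a b :=
  (hc.exists_path_of_dist a b).choose

lemma geod_isPath (hc : T.Connected) (a b : V) : (geod hc a b).IsPath :=
  (hc.exists_path_of_dist a b).choose_spec.1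

lemma geod_length (hc : T.Connected) (a b : V) : (geod hc a b).length = T.dist a b :=
  (hc.exists_path_of_dist a b).choose_spec.2

/-- the neighbour of `a` on the geodesic towards `b` -/
noncomputable def nbr (hc : T.Connected) (a b : V) : V := (geod hc a b).getVert 1

lemma adj_nbr (hc : T.Connected) {a b : V} (h : a ≠ b) : T.Adj a (nbr hc a b) := by
  have hl : 0 < (geod hc a b).length := by
    rw [geod_length]; exact hc.pos_dist_of_ne h
  simpa [Walk.getVert_zero, nbr] using (geod hc a b).adj_getVert_succ hl

lemma dist_nbr (hc : T.Connected) {a b : V} (h : a ≠ b) :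
    T.dist (nbr hc a b) b + 1 = T.dist a b := by
  have hl : 0 < (geod hc a b).length := by
    rw [geod_length]; exact hc.pos_dist_of_ne h
  have hnil : ¬ (geod hc a b).Nil := by
    rw [Walk.not_nil_iff_lt_length]; exact hl
  have h1 : T.dist (nbr hc a b) b ≤ (geod hc a b).tail.length := dist_le _
  have h2 : (geod hc a b).tail.length + 1 = (geod hc a b).length :=
    Walk.length_tail_add_one hnil
  have h3 : T.dist a b ≤ T.dist a (nbr hc a b) + T.dist (nbr hc a b) b := hc.dist_triangle
  have h4 : T.dist a (nbr hc a b) ≤ 1 := by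
    have := dist_eq_one_iff_adj.mpr (adj_nbr hc h)
    omega
  have h5 := geod_length hc a b
  omega

/-- on a geodesic, distances split -/
lemma dist_split_of_mem_geodesic (hc : T.Connected) {a b x : V} {p : T.Walk a b}
    (hp : p.length = T.dist a b) (hx : x ∈ p.support) [DecidableEq V] :
    T.dist a x + T.dist x b = T.dist a b ∧ T.dist a x ≤ (p.takeUntil x hx).length := by
  have hsplit := p.take_spec hx
  have hlen : (p.takeUntil x hx).length + (p.dropUntil x hx).length = p.length := by
    rw [← Walk.length_append, hsplit]
  have d1 : T.dist a x ≤ (p.takeUntil x hx).length := dist_le _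
  have d2 : T.dist x b ≤ (p.dropUntil x hx).length := dist_le _
  have d3 : T.dist a b ≤ T.dist a x + T.dist x b := hc.dist_triangle
  omega

/-- uniqueness: the neighbour of `a` strictly closer to `b` is unique (trees) -/
lemma nbr_unique (hT : T.IsTree) {a b w : V} (hadj : T.Adj a w)
    (hd : T.dist w b + 1 = T.dist a b) : w = nbr hT.isConnected a b := by
  classical
  set hc := hT.isConnected
  -- build path a → b through w
  have hwb_path : (geod hc w b).IsPath := geod_isPath hc w b
  have hanot : a ∉ (geod hc w b).support := by
    intro hmem
    obtain ⟨hsum, -⟩ := dist_split_of_mem_geodesic hc (geod_length hc w b) hmem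
    have h1 : 0 < T.dist w a := hc.pos_dist_of_ne (fun h => hadj.ne h.symm)
    omega
  have hP1 : (Walk.cons hadj (geod hc w b)).IsPath := hwb_path.cons hanot
  have hP2 : (geod hc a b).IsPath := geod_isPath hc a b
  have := hT.IsAcyclic.path_unique ⟨Walk.cons hadj (geod hc w b), hP1⟩ ⟨geod hc a b, hP2⟩
  have hw : (Walk.cons hadj (geod hc w b)).getVert 1 = (geod hc a b).getVert 1 := by
    rw [Subtype.ext_iff] at this
    simp only at this
    rw [this]
  rw [Walk.getVert_cons_succ, Walk.getVert_zero] at hw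
  exact hw

/-- for adjacent `c d`, the distances to any `e` differ by exactly one -/
lemma adj_dist_cases (hT : T.IsTree) {c d : V} (h : T.Adj c d) (e : V) :
    T.dist c e = T.dist d e + 1 ∨ T.dist d e = T.dist c e + 1 := by
  classical
  set hc := hT.isConnected
  have hne : T.dist c e ≠ T.dist d e := by
    intro heq
    by_cases h0 : T.dist c e = 0
    · have : c = e := (hc.dist_eq_zero_iff).mp h0
      have : d = e := (hc.dist_eq_zero_iff).mp (heq ▸ h0)
      exact h.ne (‹c = e›.trans ‹d = e›.symm)
    · by_cases hmem : d ∈ (geod hc c e).support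
      · obtain ⟨hsum, -⟩ := dist_split_of_mem_geodesic hc (geod_length hc c e) hmem
        have h1 : 0 < T.dist c d := hc.pos_dist_of_ne h.ne
        omega
      · have hP1 : (Walk.cons h.symm (geod hc c e)).IsPath :=
          (geod_isPath hc c e).cons hmem
        have := hT.IsAcyclic.path_unique ⟨Walk.cons h.symm (geod hc c e), hP1⟩
          ⟨geod hc d e, geod_isPath hc d e⟩
        have hlen : (Walk.cons h.symm (geod hc c e)).length = (geod hc d e).length := by
          rw [Subtype.ext_iff] at this; simp only at this; rw [this]
        rw [Walk.length_cons, geod_length, geod_length] at hlen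
        omega
  have t1 : T.dist c e ≤ T.dist d e + 1 := by
    have := hc.dist_triangle (u := c) (v := d) (w := e)
    have := dist_eq_one_iff_adj.mpr h
    omega
  have t2 : T.dist d e ≤ T.dist c e + 1 := by
    have := hc.dist_triangle (u := d) (v := c) (w := e)
    have := dist_eq_one_iff_adj.mpr h.symm
    omega
  omega

end SGAux


namespace SGAux
variable {V : Type*} {T : SimpleGraph V}

lemma nbr_of_adj (hT : T.IsTree) {a b : V} (h : T.Adj a b) : nbr hT.isConnected a b = b := by
  have := nbr_unique hT h (by have := dist_eq_one_iff_adj.mpr h; rw [dist_self]; omega)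
  exact this.symm

lemma nbr_eq_nbr (hT : T.IsTree) {c d e : V} (h : T.Adj c d)
    (hce : T.dist c e = T.dist d e + 1) (hde : 1 ≤ T.dist d e) :
    nbr hT.isConnected e c = nbr hT.isConnected e d := by
  set hc := hT.isConnected
  have hde' : d ≠ e := fun heq => by
    rw [heq, dist_self] at hde; omega
  have hed : e ≠ d := fun heq => hde' heq.symm
  set f := nbr hc e d with hf
  have hadj : T.Adj e f := adj_nbr hc hed
  have hfd : T.dist f d + 1 = T.dist e d := dist_nbr hc hed
  -- show dist f c + 1 = dist e c, then apply uniqueness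
  have h1 : T.dist f c ≤ T.dist f d + T.dist d c := hc.dist_triangle
  have h2 : T.dist e c ≤ T.dist e f + T.dist f c := hc.dist_triangle
  have h3 : T.dist d c = 1 := dist_eq_one_iff_adj.mpr h.symm
  have h4 : T.dist e f = 1 := dist_eq_one_iff_adj.mpr hadj
  have h5 : T.dist e c = T.dist c e := dist_comm
  have h6 : T.dist e d = T.dist d e := dist_comm
  have : T.dist f c + 1 = T.dist e c := by omega
  exact (nbr_unique hT hadj this).symm

lemma nbr_toward (hT : T.IsTree) {c d e : V} (h : T.Adj c d)
    (hce : T.dist c e = T.dist d e + 1) : nbr hT.isConnected c e = d := by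
  exact (nbr_unique hT h (by omega)).symm

lemma dist_nbr_two (hT : T.IsTree) {c d e : V} (h : T.Adj c d)
    (hce : T.dist c e = T.dist d e + 1) (hde : 1 ≤ T.dist d e) :
    T.dist c (nbr hT.isConnected d e) = 2 := by
  set hc := hT.isConnected
  have hde' : d ≠ e := fun heq => by rw [heq, dist_self] at hde; omega
  set f := nbr hc d e with hf
  have hadj : T.Adj d f := adj_nbr hc hde'
  have hfe : T.dist f e + 1 = T.dist d e := dist_nbr hc hde'
  have hfc : f ≠ c := by
    intro heq
    rw [heq] at hfe
    omega
  have := adj_dist_cases hT hadj c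
  have hdc : T.dist d c = 1 := dist_eq_one_iff_adj.mpr h.symm
  have hcf : T.dist c f = T.dist f c := dist_comm
  rcases this with h1 | h1
  · have : f = c := hc.dist_eq_zero_iff.mp (by omega)
    exact absurd this hfc
  · omega

end SGAux


namespace SGAux
variable {V : Type*} {T : SimpleGraph V}

lemma sAdj_iff {t : ℕ} {p q : Fin (t+1) → V} :
    (SierpinskiGraph T (t+1)).Adj p q ↔
      (p 0 = q 0 ∧ (SierpinskiGraph T t).Adj (Fin.tail p) (Fin.tail q)) ∨
      (T.Adj (p 0) (q 0) ∧ ∀ j : Fin t, p j.succ = q 0 ∧ q j.succ = p 0) := by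
  constructor
  · rintro ⟨i, h1, h2, h3⟩
    rcases Fin.eq_zero_or_eq_succ i with rfl | ⟨i', rfl⟩
    · exact Or.inr ⟨h1, fun j => h3 j.succ (Fin.succ_pos j)⟩
    · refine Or.inl ⟨h2 0 (Fin.succ_pos i'), ⟨i', h1, ?_, ?_⟩⟩
      · intro j hj
        exact h2 j.succ (by rwa [Fin.succ_lt_succ_iff])
      · intro j hj
        exact h3 j.succ (by rwa [Fin.succ_lt_succ_iff])
  · rintro (⟨h0, i', h1, h2, h3⟩ | ⟨hadj, hall⟩)
    · refine ⟨i'.succ, h1, ?_, ?_⟩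
      · intro j hj
        rcases Fin.eq_zero_or_eq_succ j with rfl | ⟨k, rfl⟩
        · exact h0
        · exact h2 k (by rwa [Fin.succ_lt_succ_iff] at hj)
      · intro j hj
        rcases Fin.eq_zero_or_eq_succ j with rfl | ⟨k, rfl⟩
        · exact absurd hj (by simp [Fin.lt_iff_val_lt_val])
        · exact h3 k (by rwa [Fin.succ_lt_succ_iff] at hj)
    · refine ⟨0, hadj, ?_, ?_⟩
      · intro j hj
        exact absurd hj (by simp [Fin.lt_iff_val_lt_val])
      · intro j hj
        rcases Fin.eq_zero_or_eq_succ j with rfl | ⟨k, rfl⟩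
        · exact absurd hj (by simp [Fin.lt_iff_val_lt_val])
        · exact hall k

end SGAux


namespace SGAux
variable {V : Type*} {T : SimpleGraph V}

lemma sAdj_cons {t : ℕ} (a : V) {u v : Fin t → V}
    (h : (SierpinskiGraph T t).Adj u v) :
    (SierpinskiGraph T (t+1)).Adj (Fin.cons a u) (Fin.cons a v) := by
  rw [sAdj_iff]
  exact Or.inl ⟨by simp, by simpa [Fin.tail_cons] using h⟩

lemma sAdj_cross {t : ℕ} {a b : V} (h : T.Adj a b) :
    (SierpinskiGraph T (t+1)).Adj (Fin.cons a (fun _ => b)) (Fin.cons b (fun _ => a)) := by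
  rw [sAdj_iff]
  exact Or.inr ⟨by simpa using h, fun j => by simp⟩

def consHom (T : SimpleGraph V) (a : V) (t : ℕ) :
    SierpinskiGraph T t →g SierpinskiGraph T (t+1) :=
  ⟨fun u => Fin.cons a u, fun {u v} h => sAdj_cons a h⟩

lemma sConnected (hc : T.Connected) : ∀ t, (SierpinskiGraph T t).Connected := by
  intro t
  induction t with
  | zero =>
    have : Nonempty V := hc.nonempty
    constructor
    intro u v
    have : u = v := funext fun i => i.elim0
    exact this ▸ Reachable.refl u
  | succ t ih =>
    have : Nonempty V := hc.nonempty
    have key : ∀ {a b : V} (_ : T.Walk a b) (u v : Fin t → V),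
        (SierpinskiGraph T (t+1)).Reachable (Fin.cons a u) (Fin.cons b v) := by
      intro a b W
      induction W with
      | @nil a =>
        intro u v
        exact Reachable.map (consHom T a t) (ih.preconnected u v)
      | @cons a c b hadj W' ihW =>
        intro u v
        have r1 : (SierpinskiGraph T (t+1)).Reachable (Fin.cons a u)
            (Fin.cons a (fun _ => c)) :=
          by exact Reachable.map (consHom T a t) (ih.preconnected u (fun _ => c))
        have r2 : (SierpinskiGraph T (t+1)).Reachable (Fin.cons a (fun _ => c))
            (Fin.cons c (fun _ => a)) := (sAdj_cross hadj).reachable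
        exact (r1.trans r2).trans (ihW (fun _ => a) v)
    constructor
    intro p q
    have hp : p = Fin.cons (p 0) (Fin.tail p) := (Fin.cons_self_tail p).symm
    have hq : q = Fin.cons (q 0) (Fin.tail q) := (Fin.cons_self_tail q).symm
    rw [hp, hq]
    exact key ((hc (p 0) (q 0)).some) _ _

lemma dist_cons_le (hc : T.Connected) {t : ℕ} (a : V) (u v : Fin t → V) :
    (SierpinskiGraph T (t+1)).dist (Fin.cons a u) (Fin.cons a v) ≤
      (SierpinskiGraph T t).dist u v := by
  obtain ⟨p, hp⟩ := (sConnected hc t).exists_walk_length_eq_dist u v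
  calc (SierpinskiGraph T (t+1)).dist (Fin.cons a u) (Fin.cons a v)
      ≤ (p.map (consHom T a t)).length := by exact dist_le _
    _ = p.length := Walk.length_map _ _
    _ = _ := hp

end SGAux


namespace SGAux
variable {V : Type*} {T : SimpleGraph V}

open Classical in
noncomputable def Fpot (hc : T.Connected) (t : ℕ) (p r : Fin (t+1) → V) : ℕ :=
  if p 0 = r 0 then (SierpinskiGraph T t).dist (Fin.tail p) (Fin.tail r)
  else (SierpinskiGraph T t).dist (Fin.tail p) (fun _ => nbr hc (p 0) (r 0))
     + (SierpinskiGraph T t).dist (Fin.tail r) (fun _ => nbr hc (r 0) (p 0))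
     + (2^(t+1) - 1) * (T.dist (p 0) (r 0) - 1) + 1

lemma Fpot_eq_of_eq (hc : T.Connected) {t : ℕ} {p r : Fin (t+1) → V} (h : p 0 = r 0) :
    Fpot hc t p r = (SierpinskiGraph T t).dist (Fin.tail p) (Fin.tail r) := by
  simp [Fpot, h]

lemma Fpot_eq_of_ne (hc : T.Connected) {t : ℕ} {p r : Fin (t+1) → V} (h : ¬ p 0 = r 0) :
    Fpot hc t p r = (SierpinskiGraph T t).dist (Fin.tail p) (fun _ => nbr hc (p 0) (r 0))
     + (SierpinskiGraph T t).dist (Fin.tail r) (fun _ => nbr hc (r 0) (p 0))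
     + (2^(t+1) - 1) * (T.dist (p 0) (r 0) - 1) + 1 := by
  simp [Fpot, h]

lemma Fpot_lip (hT : T.IsTree) {t : ℕ}
    (Et : ∀ a b : V, (SierpinskiGraph T t).dist (fun _ => a) (fun _ => b)
      = (2^t - 1) * T.dist a b)
    {p q r : Fin (t+1) → V}
    (h : (SierpinskiGraph T (t+1)).Adj p q) :
    Fpot hT.isConnected t p r ≤ Fpot hT.isConnected t q r + 1 := by
  classical
  set hc := hT.isConnected with hhc
  have Sc := sConnected hc t
  have hpow : 1 ≤ 2^t := Nat.one_le_two_pow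
  have hpows : (2:ℕ)^(t+1) = 2*2^t := by rw [pow_succ, mul_comm]
  rcases sAdj_iff.mp h with ⟨h0, hadj⟩ | ⟨hadj, hall⟩
  · have hd1 : (SierpinskiGraph T t).dist (Fin.tail p) (Fin.tail q) = 1 :=
      dist_eq_one_iff_adj.mpr hadj
    by_cases hr : q 0 = r 0
    · rw [Fpot_eq_of_eq hc (h0.trans hr), Fpot_eq_of_eq hc hr]
      have := Sc.dist_triangle (u := Fin.tail p) (v := Fin.tail q) (w := Fin.tail r)
      omega
    · rw [Fpot_eq_of_ne hc (fun hh => hr (h0.symm.trans hh)), Fpot_eq_of_ne hc hr, h0]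
      have := Sc.dist_triangle (u := Fin.tail p) (v := Fin.tail q)
        (w := (fun _ => nbr hc (q 0) (r 0)))
      omega
  · have htp : Fin.tail p = (fun _ => q 0) := funext fun j => (hall j).1
    have htq : Fin.tail q = (fun _ => p 0) := funext fun j => (hall j).2
    have hne : p 0 ≠ q 0 := hadj.ne
    by_cases hr1 : p 0 = r 0
    · have hrq : ¬ q 0 = r 0 := fun hh => hne (hr1.trans hh.symm)
      rw [Fpot_eq_of_eq hc hr1, Fpot_eq_of_ne hc hrq, htp, htq]
      have e1 : nbr hc (q 0) (r 0) = r 0 := by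
        rw [← hr1]; exact nbr_of_adj hT hadj.symm
      have e2 : nbr hc (r 0) (q 0) = q 0 := by
        have : nbr hc (p 0) (q 0) = q 0 := nbr_of_adj hT hadj
        rwa [hr1] at this
      have e3 : T.dist (q 0) (r 0) = 1 := by
        have : T.dist (q 0) (p 0) = 1 := dist_eq_one_iff_adj.mpr hadj.symm
        rwa [hr1] at this
      rw [e1, e2, e3]
      have e4 : (SierpinskiGraph T t).dist (fun _ => p 0) (fun _ => r 0) = 0 := by
        rw [hr1]; exact dist_self
      have e5 : (SierpinskiGraph T t).dist (fun _ => q 0) (Fin.tail r)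
          = (SierpinskiGraph T t).dist (Fin.tail r) (fun _ => q 0) := dist_comm
      omega
    · by_cases hr2 : q 0 = r 0
      · rw [Fpot_eq_of_ne hc hr1, Fpot_eq_of_eq hc hr2, htp, htq]
        have e1 : nbr hc (p 0) (r 0) = r 0 := by
          rw [← hr2]; exact nbr_of_adj hT hadj
        have e2 : nbr hc (r 0) (p 0) = p 0 := by
          have : nbr hc (q 0) (p 0) = p 0 := nbr_of_adj hT hadj.symm
          rwa [hr2] at this
        have e3 : T.dist (p 0) (r 0) = 1 := by
          have : T.dist (p 0) (q 0) = 1 := dist_eq_one_iff_adj.mpr hadj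
          rwa [hr2] at this
        rw [e1, e2, e3]
        have e4 : (SierpinskiGraph T t).dist (fun _ => q 0) (fun _ => r 0) = 0 := by
          rw [hr2]; exact dist_self
        have e5 : (SierpinskiGraph T t).dist (fun _ => p 0) (Fin.tail r)
            = (SierpinskiGraph T t).dist (Fin.tail r) (fun _ => p 0) := dist_comm
        omega
      · rw [Fpot_eq_of_ne hc hr1, Fpot_eq_of_ne hc hr2, htp, htq]
        have hq0r : q 0 ≠ r 0 := hr2
        have hp0r : p 0 ≠ r 0 := hr1
        rcases adj_dist_cases hT hadj (r 0) with hce | hce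
        · -- p 0 is farther
          have hk' : 1 ≤ T.dist (q 0) (r 0) :=
            hT.isConnected.pos_dist_of_ne hq0r
          have e1 : nbr hc (p 0) (r 0) = q 0 := nbr_toward hT hadj hce
          have e2 : nbr hc (r 0) (p 0) = nbr hc (r 0) (q 0) :=
            nbr_eq_nbr hT hadj hce hk'
          have e3 : T.dist (p 0) (nbr hc (q 0) (r 0)) = 2 :=
            dist_nbr_two hT hadj hce hk'
          rw [e1, e2]
          have e4 : (SierpinskiGraph T t).dist (fun _ => q 0) (fun _ => q 0) = 0 :=
            dist_self
          have e5 : (SierpinskiGraph T t).dist (fun _ => p 0)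
              (fun _ => nbr hc (q 0) (r 0)) = (2^t - 1) * 2 := by
            rw [Et, e3]
          rw [e4, e5, hce]
          have hk2 : T.dist (q 0) (r 0) + 1 - 1 = (T.dist (q 0) (r 0) - 1) + 1 := by omega
          rw [hk2, mul_add, mul_one]
          have hD : 2^(t+1) - 1 = 2*(2^t-1)+1 := by omega
          omega
        · -- q 0 is farther
          have hk'' : 1 ≤ T.dist (p 0) (r 0) :=
            hT.isConnected.pos_dist_of_ne hp0r
          have e1 : nbr hc (q 0) (r 0) = p 0 := nbr_toward hT hadj.symm hce
          have e2 : nbr hc (r 0) (q 0) = nbr hc (r 0) (p 0) :=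
            nbr_eq_nbr hT hadj.symm hce hk''
          have e3 : T.dist (q 0) (nbr hc (p 0) (r 0)) = 2 :=
            dist_nbr_two hT hadj.symm hce hk''
          rw [e1, e2]
          have e4 : (SierpinskiGraph T t).dist (fun _ => p 0) (fun _ => p 0) = 0 :=
            dist_self
          have e5 : (SierpinskiGraph T t).dist (fun _ => q 0)
              (fun _ => nbr hc (p 0) (r 0)) = (2^t - 1) * 2 := by
            rw [Et, e3]
          rw [e4, e5, hce]
          have hk2 : T.dist (p 0) (r 0) + 1 - 1 = (T.dist (p 0) (r 0) - 1) + 1 := by omega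
          rw [hk2, mul_add, mul_one]
          have hD : 2^(t+1) - 1 = 2*(2^t-1)+1 := by omega
          omega

lemma Fpot_le_dist (hT : T.IsTree) {t : ℕ}
    (Et : ∀ a b : V, (SierpinskiGraph T t).dist (fun _ => a) (fun _ => b)
      = (2^t - 1) * T.dist a b)
    (p r : Fin (t+1) → V) :
    Fpot hT.isConnected t p r ≤ (SierpinskiGraph T (t+1)).dist p r := by
  have key : ∀ (p' r' : Fin (t+1) → V) (W : (SierpinskiGraph T (t+1)).Walk p' r'),
      Fpot hT.isConnected t p' r' ≤ W.length := by
    intro p' r' W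
    induction W with
    | nil =>
      rw [Fpot_eq_of_eq hT.isConnected rfl, dist_self]
      simp
    | @cons u' v' w' hadj W' ih =>
      have := Fpot_lip hT Et (r := w') hadj
      rw [Walk.length_cons]
      omega
  obtain ⟨W, hW⟩ := (sConnected hT.isConnected (t+1)).exists_walk_length_eq_dist p r
  rw [← hW]
  exact key p r W

end SGAux


namespace SGAux
variable {V : Type*} {T : SimpleGraph V}

lemma sdist_le_of_dist (hT : T.IsTree) {t : ℕ}
    (Et : ∀ a b : V, (SierpinskiGraph T t).dist (fun _ => a) (fun _ => b)
      = (2^t - 1) * T.dist a b) :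
    ∀ (k : ℕ), ∀ {a b : V}, T.dist a b = k → 1 ≤ k → ∀ (u v : Fin t → V),
    (SierpinskiGraph T (t+1)).dist (Fin.cons a u) (Fin.cons b v) ≤
      (SierpinskiGraph T t).dist u (fun _ => nbr hT.isConnected a b)
      + (SierpinskiGraph T t).dist v (fun _ => nbr hT.isConnected b a)
      + (2^(t+1) - 1) * (k - 1) + 1 := by
  set hc := hT.isConnected with hhc
  have Sc := sConnected hc (t+1)
  have hpow : 1 ≤ 2^t := Nat.one_le_two_pow
  have hpows : (2:ℕ)^(t+1) = 2*2^t := by rw [pow_succ, mul_comm]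
  intro k
  induction k using Nat.strong_induction_on with
  | _ k ih =>
    intro a b hk hk1 u v
    have hab : a ≠ b := by
      intro hh
      rw [hh, dist_self] at hk
      omega
    rcases Nat.eq_or_lt_of_le hk1 with h1 | h2
    · -- k = 1 : a and b adjacent
      have hadj : T.Adj a b := dist_eq_one_iff_adj.mp (by omega)
      have hnab : nbr hc a b = b := nbr_of_adj hT hadj
      have hnba : nbr hc b a = a := nbr_of_adj hT hadj.symm
      have t1 := Sc.dist_triangle (u := Fin.cons a u) (v := Fin.cons a (fun _ => b))
        (w := Fin.cons b v)
      have t2 := Sc.dist_triangle (u := Fin.cons a (fun _ => b))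
        (v := Fin.cons b (fun _ => a)) (w := Fin.cons b v)
      have d1 := dist_cons_le hc a u (fun _ => b)
      have d2 : (SierpinskiGraph T (t+1)).dist (Fin.cons a (fun _ => b))
          (Fin.cons b (fun _ => a)) ≤ 1 := by
        have := dist_eq_one_iff_adj.mpr (sAdj_cross (T := T) (t := t) hadj)
        omega
      have d3 := dist_cons_le hc b (fun _ => a) v
      have d4 : (SierpinskiGraph T t).dist (fun _ => a) v
          = (SierpinskiGraph T t).dist v (fun _ => a) := dist_comm
      rw [hnab, hnba]
      omega
    · -- k ≥ 2
      set c := nbr hc a b with hcdef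
      have hadj : T.Adj a c := adj_nbr hc hab
      have hcb : T.dist c b + 1 = T.dist a b := dist_nbr hc hab
      have hcb' : T.dist c b = k - 1 := by omega
      have hk2 : 1 ≤ k - 1 := by omega
      have hlt : k - 1 < k := by omega
      have step := ih (k-1) hlt hcb' hk2 (fun _ => a) v
      have t1 := Sc.dist_triangle (u := Fin.cons a u) (v := Fin.cons a (fun _ => c))
        (w := Fin.cons c (fun _ => a))
      have t2 := Sc.dist_triangle (u := Fin.cons a u) (v := Fin.cons c (fun _ => a))
        (w := Fin.cons b v)
      have d1 := dist_cons_le hc a u (fun _ => c)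
      have d2 : (SierpinskiGraph T (t+1)).dist (Fin.cons a (fun _ => c))
          (Fin.cons c (fun _ => a)) ≤ 1 := by
        have := dist_eq_one_iff_adj.mpr (sAdj_cross (T := T) (t := t) hadj)
        omega
      -- identify terms in `step`
      have e1 : (SierpinskiGraph T t).dist (fun _ => a) (fun _ => nbr hc c b)
          = (2^t - 1) * 2 := by
        rw [Et]
        have : T.dist a (nbr hc c b) = 2 :=
          dist_nbr_two hT hadj (by omega) (by omega)
        rw [this]
      have e2 : nbr hc b c = nbr hc b a :=
        (nbr_eq_nbr hT hadj (by omega) (by omega)).symm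
      rw [e1, e2] at step
      have harith : (2^(t+1) - 1) * (k - 1) = (2^(t+1) - 1) * (k - 1 - 1) + (2^(t+1) - 1) := by
        have hh : k - 1 = (k - 1 - 1) + 1 := by omega
        conv_lhs => rw [hh]
        rw [Nat.mul_add, Nat.mul_one]
      rw [harith]
      have hD : 2^(t+1) - 1 = 2*(2^t-1)+1 := by omega
      omega

theorem E_all (hT : T.IsTree) : ∀ (t : ℕ) (a b : V),
    (SierpinskiGraph T t).dist (fun _ => a) (fun _ => b) = (2^t - 1) * T.dist a b := by
  intro t
  induction t with
  | zero =>
    intro a b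
    have : (fun _ : Fin 0 => a) = (fun _ : Fin 0 => b) := funext fun i => i.elim0
    rw [this, dist_self]
    simp
  | succ t Et =>
    intro a b
    by_cases hab : a = b
    · rw [hab, dist_self, dist_self, Nat.mul_zero]
    · set hc := hT.isConnected with hhc
      have hk : 1 ≤ T.dist a b := hc.pos_dist_of_ne hab
      have hconsa : (fun _ : Fin (t+1) => a) = Fin.cons a (fun _ : Fin t => a) := by
        funext i
        rcases Fin.eq_zero_or_eq_succ i with rfl | ⟨j, rfl⟩ <;> simp
      have hconsb : (fun _ : Fin (t+1) => b) = Fin.cons b (fun _ : Fin t => b) := by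
        funext i
        rcases Fin.eq_zero_or_eq_succ i with rfl | ⟨j, rfl⟩ <;> simp
      have hpow : 1 ≤ 2^t := Nat.one_le_two_pow
      have hpows : (2:ℕ)^(t+1) = 2*2^t := by rw [pow_succ, mul_comm]
      have hD : 2^(t+1) - 1 = 2*(2^t-1)+1 := by omega
      have ena : T.dist a (nbr hc a b) = 1 := dist_eq_one_iff_adj.mpr (adj_nbr hc hab)
      have enb : T.dist b (nbr hc b a) = 1 :=
        dist_eq_one_iff_adj.mpr (adj_nbr hc (Ne.symm hab))
      have hub := sdist_le_of_dist hT Et (T.dist a b) rfl hk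
        (fun _ : Fin t => a) (fun _ : Fin t => b)
      rw [Et, Et, ena, enb, Nat.mul_one] at hub
      have hlb := Fpot_le_dist hT Et (Fin.cons a (fun _ : Fin t => a))
        (Fin.cons b (fun _ : Fin t => b))
      have hfp : Fpot hc t (Fin.cons a (fun _ : Fin t => a))
          (Fin.cons b (fun _ : Fin t => b)) =
          (2^t - 1) + (2^t - 1) + (2^(t+1) - 1) * (T.dist a b - 1) + 1 := by
        rw [Fpot_eq_of_ne hc (by simpa using hab)]
        simp only [Fin.cons_zero, Fin.tail_cons]
        rw [Et, Et, ena, enb, Nat.mul_one]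
      rw [hconsa, hconsb]
      rw [hfp] at hlb
      have harith : (2^(t+1) - 1) * (T.dist a b)
          = (2^(t+1) - 1) * (T.dist a b - 1) + (2^(t+1) - 1) := by
        have hh : T.dist a b = (T.dist a b - 1) + 1 := by omega
        conv_lhs => rw [hh]
        rw [Nat.mul_add, Nat.mul_one]
      omega

theorem sdist_cons_same (hT : T.IsTree) {t : ℕ} (a : V) (u v : Fin t → V) :
    (SierpinskiGraph T (t+1)).dist (Fin.cons a u) (Fin.cons a v)
      = (SierpinskiGraph T t).dist u v := by
  refine le_antisymm (dist_cons_le hT.isConnected a u v) ?_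
  have := Fpot_le_dist hT (E_all hT t) (Fin.cons a u) (Fin.cons a v)
  rwa [Fpot_eq_of_eq hT.isConnected (by simp), Fin.tail_cons, Fin.tail_cons] at this

theorem sdist_cons_ne (hT : T.IsTree) {t : ℕ} {a b : V} (hab : a ≠ b)
    (u v : Fin t → V) :
    (SierpinskiGraph T (t+1)).dist (Fin.cons a u) (Fin.cons b v)
      = (SierpinskiGraph T t).dist u (fun _ => nbr hT.isConnected a b)
        + (SierpinskiGraph T t).dist v (fun _ => nbr hT.isConnected b a)
        + (2^(t+1) - 1) * (T.dist a b - 1) + 1 := by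
  have hk : 1 ≤ T.dist a b := hT.isConnected.pos_dist_of_ne hab
  refine le_antisymm (sdist_le_of_dist hT (E_all hT t) (T.dist a b) rfl hk u v) ?_
  have := Fpot_le_dist hT (E_all hT t) (Fin.cons a u) (Fin.cons b v)
  rwa [Fpot_eq_of_ne hT.isConnected (by simpa using hab), Fin.tail_cons, Fin.tail_cons,
    Fin.cons_zero, Fin.cons_zero] at this

end SGAux


namespace SGAux
variable {V : Type*} {T : SimpleGraph V}

lemma dist_cast {n n' : ℕ} (h : n = n') (u v : Fin n → V) :
    (SierpinskiGraph T n').dist (fun i => u (Fin.cast h.symm i))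
      (fun i => v (Fin.cast h.symm i)) = (SierpinskiGraph T n).dist u v := by
  subst h
  rfl

lemma strip_one (hT : T.IsTree) {n : ℕ} (w w' : Fin (n+1) → V) (h0 : w 0 = w' 0) :
    (SierpinskiGraph T (n+1)).dist w w'
      = (SierpinskiGraph T n).dist (Fin.tail w) (Fin.tail w') := by
  conv_lhs => rw [← Fin.cons_self_tail w, ← Fin.cons_self_tail w', h0]
  exact sdist_cons_same hT (w' 0) _ _

lemma strip_many (hT : T.IsTree) : ∀ (s n : ℕ) (w w' : Fin (s + n) → V),
    (∀ i : Fin (s + n), (i : ℕ) < s → w i = w' i) →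
    (SierpinskiGraph T (s + n)).dist w w'
      = (SierpinskiGraph T n).dist (fun i => w (Fin.natAdd s i))
          (fun i => w' (Fin.natAdd s i)) := by
  intro s
  induction s with
  | zero =>
    intro n w w' h
    have hcast : n = 0 + n := (Nat.zero_add n).symm
    have key := dist_cast (T := T) hcast (fun i : Fin n => w (Fin.natAdd 0 i))
      (fun i : Fin n => w' (Fin.natAdd 0 i))
    have e1 : (fun i' : Fin (0+n) => w (Fin.natAdd 0 (Fin.cast hcast.symm i'))) = w := by
      funext i'
      congr 1
      ext
      simp
    have e2 : (fun i' : Fin (0+n) => w' (Fin.natAdd 0 (Fin.cast hcast.symm i'))) = w' := by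
      funext i'
      congr 1
      ext
      simp
    rw [e1, e2] at key
    exact key
  | succ s ih =>
    intro n w w' h
    have hcast : s + 1 + n = (s + n) + 1 := by omega
    set ω : Fin ((s+n)+1) → V := fun i => w (Fin.cast hcast.symm i) with hω
    set ω' : Fin ((s+n)+1) → V := fun i => w' (Fin.cast hcast.symm i) with hω'
    have key := dist_cast (T := T) hcast w w'
    have h0 : ω 0 = ω' 0 := by
      apply h
      simp
    have hstep := strip_one hT ω ω' h0
    have htail : ∀ i : Fin (s+n), (i : ℕ) < s → Fin.tail ω i = Fin.tail ω' i := by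
      intro i hi
      have : ((Fin.cast hcast.symm i.succ : Fin (s+1+n)) : ℕ) < s + 1 := by
        simp
        omega
      exact h _ this
    have hres := ih n (Fin.tail ω) (Fin.tail ω') htail
    have efin : ∀ (i : Fin n), Fin.cast hcast.symm ((Fin.natAdd s i).succ)
        = Fin.natAdd (s+1) i := by
      intro i
      ext
      simp
      omega
    have e3 : (fun i : Fin n => Fin.tail ω (Fin.natAdd s i))
        = (fun i : Fin n => w (Fin.natAdd (s+1) i)) := by
      funext i
      show ω ((Fin.natAdd s i).succ) = _
      rw [hω]
      simp only
      rw [efin i]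
    have e4 : (fun i : Fin n => Fin.tail ω' (Fin.natAdd s i))
        = (fun i : Fin n => w' (Fin.natAdd (s+1) i)) := by
      funext i
      show ω' ((Fin.natAdd s i).succ) = _
      rw [hω']
      simp only
      rw [efin i]
    rw [e3, e4] at hres
    rw [← key, hstep, hres]

end SGAux



open SGAux

/-- for a tree `T`, with `t = j + m` (`j, m ≥ 1`),
`w = z^{j-1} x x_{j+1} ⋯ x_t`, `w' = z^{j-1} y y_{j+1} ⋯ y_t`, `x ≠ y`:
`d_{S(T,t)}(w,w') = d_{S(T,m)}((x')^m, x_{j+1}⋯x_t) + d_{S(T,m)}((y')^m, y_{j+1}⋯y_t)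
  + (2^{m+1} − 1)·d_T(x,y) − 2(2^m − 1)`,
where `x'` and `y'` are the neighbours of `x` and `y` on the (unique) `x`–`y` path `q`
in `T` (the second and penultimate vertices of `q`). -/
theorem stmt_11 {V : Type*} (T : SimpleGraph V) (hT : T.IsTree)
    (j m : ℕ) (hj : 1 ≤ j) (hm : 1 ≤ m)
    (x y z : V) (hxy : x ≠ y)
    (w w' : Fin (j + m) → V)
    (hpre : ∀ i : Fin (j + m), (i : ℕ) < j - 1 → w i = z ∧ w' i = z)
    (hwx : w ⟨j - 1, by omega⟩ = x) (hwy : w' ⟨j - 1, by omega⟩ = y)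
    (q : T.Walk x y) (hq : q.IsPath) :
    (SierpinskiGraph T (j + m)).dist w w' =
      (SierpinskiGraph T m).dist (fun _ => q.getVert 1)
          (fun i : Fin m => w (Fin.natAdd j i))
        + (SierpinskiGraph T m).dist (fun _ => q.getVert (q.length - 1))
            (fun i : Fin m => w' (Fin.natAdd j i))
        + (2 ^ (m + 1) - 1) * T.dist x y - 2 * (2 ^ m - 1) := by
  classical
  set hc := hT.isConnected with hhc
  have hqgeod : q = geod hc x y := by
    have := hT.IsAcyclic.path_unique ⟨q, hq⟩ ⟨geod hc x y, geod_isPath hc x y⟩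
    exact congrArg Subtype.val this
  have hx' : q.getVert 1 = nbr hc x y := by rw [hqgeod]; rfl
  have hy' : q.getVert (q.length - 1) = nbr hc y x := by
    have hrev : q.reverse = geod hc y x := by
      have := hT.IsAcyclic.path_unique ⟨q.reverse, hq.reverse⟩
        ⟨geod hc y x, geod_isPath hc y x⟩
      exact congrArg Subtype.val this
    have h2 : (q.reverse).getVert 1 = q.getVert (q.length - 1) := by
      rw [Walk.getVert_reverse]
    rw [← h2, hrev]
    rfl
  have hcast : j + m = (j - 1) + (m + 1) := by omega
  set ω : Fin ((j-1)+(m+1)) → V := fun i => w (Fin.cast hcast.symm i) with hω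
  set ω' : Fin ((j-1)+(m+1)) → V := fun i => w' (Fin.cast hcast.symm i) with hω'
  have key := dist_cast (T := T) hcast w w'
  have hyp : ∀ i : Fin ((j-1)+(m+1)), (i:ℕ) < j - 1 → ω i = ω' i := by
    intro i hi
    have h1 := hpre (Fin.cast hcast.symm i) (by simpa using hi)
    show w _ = w' _
    rw [h1.1, h1.2]
  have hstrip := strip_many hT (j-1) (m+1) ω ω' hyp
  set A : Fin (m+1) → V := fun i => ω (Fin.natAdd (j-1) i) with hA
  set B : Fin (m+1) → V := fun i => ω' (Fin.natAdd (j-1) i) with hB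
  have hidx : (Fin.cast hcast.symm (Fin.natAdd (j-1) (0 : Fin (m+1))))
      = (⟨j - 1, by omega⟩ : Fin (j+m)) := by
    ext
    simp
  have hA0 : A 0 = x := by
    show w (Fin.cast hcast.symm (Fin.natAdd (j-1) (0 : Fin (m+1)))) = x
    rw [hidx]
    exact hwx
  have hB0 : B 0 = y := by
    show w' (Fin.cast hcast.symm (Fin.natAdd (j-1) (0 : Fin (m+1)))) = y
    rw [hidx]
    exact hwy
  have hAB : (SierpinskiGraph T (m+1)).dist A B
      = (SierpinskiGraph T m).dist (Fin.tail A) (fun _ => nbr hc x y)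
        + (SierpinskiGraph T m).dist (Fin.tail B) (fun _ => nbr hc y x)
        + (2^(m+1) - 1) * (T.dist x y - 1) + 1 := by
    conv_lhs => rw [← Fin.cons_self_tail A, ← Fin.cons_self_tail B, hA0, hB0]
    exact sdist_cons_ne hT hxy (Fin.tail A) (Fin.tail B)
  have hTA : Fin.tail A = (fun i : Fin m => w (Fin.natAdd j i)) := by
    funext i
    show w (Fin.cast hcast.symm (Fin.natAdd (j-1) i.succ)) = w (Fin.natAdd j i)
    congr 1
    ext
    simp
    omega
  have hTB : Fin.tail B = (fun i : Fin m => w' (Fin.natAdd j i)) := by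
    funext i
    show w' (Fin.cast hcast.symm (Fin.natAdd (j-1) i.succ)) = w' (Fin.natAdd j i)
    congr 1
    ext
    simp
    omega
  have hc1 : (SierpinskiGraph T m).dist (Fin.tail A) (fun _ => nbr hc x y)
      = (SierpinskiGraph T m).dist (fun _ => q.getVert 1)
          (fun i : Fin m => w (Fin.natAdd j i)) := by
    rw [hTA, hx', dist_comm]
  have hc2 : (SierpinskiGraph T m).dist (Fin.tail B) (fun _ => nbr hc y x)
      = (SierpinskiGraph T m).dist (fun _ => q.getVert (q.length - 1))
          (fun i : Fin m => w' (Fin.natAdd j i)) := by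
    rw [hTB, hy', dist_comm]
  have hk : 1 ≤ T.dist x y := hc.pos_dist_of_ne hxy
  have hpow : 1 ≤ 2^m := Nat.one_le_two_pow
  have hpows : (2:ℕ)^(m+1) = 2*2^m := by rw [pow_succ, mul_comm]
  have harith : (2^(m+1) - 1) * (T.dist x y)
      = (2^(m+1) - 1) * (T.dist x y - 1) + (2^(m+1) - 1) := by
    have hh : T.dist x y = (T.dist x y - 1) + 1 := by omega
    conv_lhs => rw [hh]
    rw [Nat.mul_add, Nat.mul_one]
  rw [← key, hstrip]
  show (SierpinskiGraph T (m+1)).dist A B = _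
  rw [hAB, hc1, hc2, harith]
  omega
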